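/- arXiv:1507.03396 — 2 statements merged into one kernel-verified Lean document; each statement's English description precedes it below -/
import Mathlib

section
/- If Y is a closed subset of a topological space X and R is a closed equivalence relation on Y (with its subspace topology), then the equivalence relation R̄ := R ∪ id_X on X (which identifies two points iff they are equal or both lie in Y and are R-related) is a closed equivalence relation on X. -/
/-- If `Y ⊆ X` is closed and `R` is a closed equivalence relation on `Y`
(subspace topology), then `R̄ = R ∪ id_X` is a closed equivalence relation on `X`. -/
theorem isClosedMap_quotient_extension {X : Type*} [TopologicalSpace X]
    {Y : Set X} (hY : IsClosed Y)
    (R : Setoid Y) (hR : IsClosedMap (Quotient.mk R))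
    (S : Setoid X)
    (hS : ∀ x y : X, S.r x y ↔
      x = y ∨ ∃ (hx : x ∈ Y) (hy : y ∈ Y), R.r ⟨x, hx⟩ ⟨y, hy⟩) :
    IsClosedMap (Quotient.mk S) := by
  intro C hC
  rw [← isQuotientMap_quotient_mk'.isClosed_preimage]
  show IsClosed (Quotient.mk S ⁻¹' (Quotient.mk S '' C))
  have key : Quotient.mk S ⁻¹' (Quotient.mk S '' C) =
      C ∪ (Subtype.val '' (Quotient.mk R ⁻¹' (Quotient.mk R '' (Subtype.val ⁻¹' C)))) := by
    ext x
    constructor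
    · rintro ⟨c, hc, hcx⟩
      rcases (hS c x).mp (Quotient.eq.mp hcx) with rfl | ⟨hcY, hxY, hr⟩
      · exact Or.inl hc
      · exact Or.inr ⟨⟨x, hxY⟩, ⟨⟨c, hcY⟩, hc, Quotient.eq.mpr hr⟩, rfl⟩
    · rintro (hx | ⟨⟨x, hxY⟩, ⟨⟨c, hcY⟩, hc, hcx⟩, rfl⟩)
      · exact ⟨x, hx, rfl⟩
      · exact ⟨c, hc, Quotient.eq.mpr ((hS c x).mpr (Or.inr ⟨hcY, hxY, Quotient.eq.mp hcx⟩))⟩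
  rw [key]
  exact hC.union (hY.isClosedEmbedding_subtypeVal.isClosedMap _
    ((hR _ (hC.preimage continuous_subtype_val)).preimage continuous_quotient_mk'))
end

section
/- Let X₁ and X₂ be topological spaces and h : X₁ → X₂ a homotopy equivalence. If f₁ : S^{n-1} → X₁ and f₂ : S^{n-1} → X₂ are continuous maps with f₂ = h ∘ f₁, then the adjunction spaces X₁ ∪_{f₁} B^n and X₂ ∪_{f₂} B^n (obtained by gluing an n-cell along f₁ and f₂ respectively) are homotopy equivalent. -/
open Metric

/-- The closed unit ball in `ℝⁿ`. -/
def UnitBall (n : ℕ) : Set (EuclideanSpace ℝ (Fin n)) := Metric.closedBall 0 1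

/-- The unit sphere in `ℝⁿ`. -/
def UnitSphere (n : ℕ) : Set (EuclideanSpace ℝ (Fin n)) := Metric.sphere 0 1

/-- The relation on `X ⊕ Bⁿ` generating the adjunction-space identification:
each sphere point `z` is identified with `f z ∈ X`. -/
def attachRel {X : Type*} (n : ℕ) (f : ↥(UnitSphere n) → X) :
    (X ⊕ ↥(UnitBall n)) → (X ⊕ ↥(UnitBall n)) → Prop := fun a b =>
  ∃ z : ↥(UnitSphere n),
    a = Sum.inr ⟨z.val, Metric.sphere_subset_closedBall z.property⟩ ∧ b = Sum.inl (f z)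

/-- The adjunction space `X ∪_f Bⁿ`, obtained by gluing an `n`-cell to `X`
along the attaching map `f : S^{n-1} → X`; it carries the quotient topology. -/
def AttachCell {X : Type*} [TopologicalSpace X] (n : ℕ) (f : ↥(UnitSphere n) → X) :
    Type _ := Quot (attachRel n f)

noncomputable instance {X : Type*} [TopologicalSpace X] (n : ℕ) (f : ↥(UnitSphere n) → X) :
    TopologicalSpace (AttachCell n f) :=
  instTopologicalSpaceQuot

----------------------------------------------------------------
-- Preliminaries
----------------------------------------------------------------

namespace AttachAux

open unitInterval Set

variable {n : ℕ}

abbrev Eucl (n : ℕ) := EuclideanSpace ℝ (Fin n)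

lemma norm_ball_le (b : ↥(UnitBall n)) : ‖(b : Eucl n)‖ ≤ 1 :=
  mem_closedBall_zero_iff.mp b.2

lemma norm_sphere (z : ↥(UnitSphere n)) : ‖(z : Eucl n)‖ = 1 :=
  mem_sphere_zero_iff_norm.mp z.2

/-- retraction of the whole space onto the closed unit ball -/
noncomputable def ballProj (x : Eucl n) : Eucl n := if ‖x‖ ≤ 1 then x else ‖x‖⁻¹ • x

lemma ballProj_eq_self {x : Eucl n} (h : ‖x‖ ≤ 1) : ballProj x = x := if_pos h

lemma ballProj_norm_le (x : Eucl n) : ‖ballProj x‖ ≤ 1 := by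
  unfold ballProj
  split_ifs with h
  · exact h
  · push_neg at h
    have hx : ‖x‖ ≠ 0 := by positivity
    rw [norm_smul, norm_inv, norm_norm, inv_mul_cancel₀ hx]

lemma continuous_ballProj : Continuous (ballProj (n := n)) := by
  apply continuous_if_le continuous_norm continuous_const continuous_id.continuousOn
  · apply ContinuousOn.fun_smul
    · exact (continuous_norm.continuousOn.inv₀ (fun x hx => by
        have : (1:ℝ) ≤ ‖x‖ := hx
        positivity))
    · exact continuous_id.continuousOn
  · intro x hx
    simp only [id_eq]
    rw [hx, inv_one, one_smul]

noncomputable def ballProj' (x : Eucl n) : ↥(UnitBall n) :=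
  ⟨ballProj x, mem_closedBall_zero_iff.mpr (ballProj_norm_le x)⟩

lemma ballProj'_coe (x : Eucl n) : (ballProj' x : Eucl n) = ballProj x := rfl

lemma continuous_ballProj' : Continuous (ballProj' (n := n)) :=
  continuous_ballProj.subtype_mk _

lemma ballProj'_of_norm_le {x : Eucl n} (h : ‖x‖ ≤ 1) (hx : x ∈ UnitBall n) :
    ballProj' x = ⟨x, hx⟩ := Subtype.ext (ballProj_eq_self h)

/-- normalization to the sphere -/
noncomputable def sphPt (x : Eucl n) (hx : x ≠ 0) : ↥(UnitSphere n) :=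
  ⟨‖x‖⁻¹ • x, by
    have : ‖x‖ ≠ 0 := norm_ne_zero_iff.mpr hx
    rw [UnitSphere, mem_sphere_zero_iff_norm, norm_smul, norm_inv, norm_norm,
      inv_mul_cancel₀ this]⟩

lemma sphPt_coe (x : Eucl n) (hx : x ≠ 0) : (sphPt x hx : Eucl n) = ‖x‖⁻¹ • x := rfl

lemma sphPt_smul {x : Eucl n} {c : ℝ} (hc : 0 < c) (hx : x ≠ 0) (hcx : c • x ≠ 0) :
    sphPt (c • x) hcx = sphPt x hx := by
  apply Subtype.ext
  rw [sphPt_coe, sphPt_coe, norm_smul, Real.norm_eq_abs, abs_of_pos hc, smul_smul]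
  congr 1
  have hn : ‖x‖ ≠ 0 := norm_ne_zero_iff.mpr hx
  field_simp

lemma sphPt_of_norm_one {x : Eucl n} (h : ‖x‖ = 1) (hx : x ≠ 0) :
    (sphPt x hx : Eucl n) = x := by rw [sphPt_coe, h, inv_one, one_smul]

def sphIncl (z : ↥(UnitSphere n)) : ↥(UnitBall n) :=
  ⟨z.val, Metric.sphere_subset_closedBall z.property⟩

lemma sphIncl_ne_zero (z : ↥(UnitSphere n)) : (sphIncl z : Eucl n) ≠ 0 := by
  intro h
  have := norm_sphere z
  rw [show (z : Eucl n) = (sphIncl z : Eucl n) from rfl, h] at this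
  simp at this

/-- the fundamental identification in the adjunction space -/
lemma mk_rel {X : Type*} [TopologicalSpace X] (f : C(↥(UnitSphere n), X))
    (z : ↥(UnitSphere n)) :
    (Quot.mk (attachRel n ⇑f) (Sum.inr (sphIncl z)) : AttachCell n ⇑f) =
      Quot.mk (attachRel n ⇑f) (Sum.inl (f z)) :=
  Quot.sound ⟨z, rfl, rfl⟩

end AttachAux

namespace AttachAux

open unitInterval Set Metric
open scoped Classical

variable {n : ℕ} {X X' : Type*} [TopologicalSpace X] [TopologicalSpace X']

/-- Data for a "collar-type" family of maps `AttachCell n f → AttachCell n f'`,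
parametrized by `s : I`. -/
structure CollarData (n : ℕ) (f : C(↥(UnitSphere n), X)) (f' : C(↥(UnitSphere n), X')) where
  P : C(unitInterval × X, X')
  θ : C(unitInterval, ℝ)
  hθ₁ : ∀ s, 1/4 ≤ θ s
  hθ₂ : ∀ s, θ s ≤ 1
  Γ : C(unitInterval × ℝ × ↥(UnitSphere n), X')
  hΓθ : ∀ s z, Γ (s, θ s, z) = f' z
  hΓ1 : ∀ s z, Γ (s, 1, z) = P (s, f z)

namespace CollarData

variable {f : C(↥(UnitSphere n), X)} {f' : C(↥(UnitSphere n), X')}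

noncomputable def junk (f' : C(↥(UnitSphere n), X')) : AttachCell n ⇑f' :=
  Quot.mk _ (Sum.inr ⟨0, mem_closedBall_self zero_le_one⟩)

noncomputable def rawInr (D : CollarData n f f') (p : ↥(UnitBall n) × unitInterval) :
    AttachCell n ⇑f' :=
  if ‖(p.1 : Eucl n)‖ ≤ D.θ p.2 then
    Quot.mk _ (Sum.inr (ballProj' ((D.θ p.2)⁻¹ • (p.1 : Eucl n))))
  else if hb : (p.1 : Eucl n) = 0 then junk f'
  else Quot.mk _ (Sum.inl (D.Γ (p.2, ‖(p.1 : Eucl n)‖, sphPt _ hb)))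

lemma rawInr_le (D : CollarData n f f') {b : ↥(UnitBall n)} {s : unitInterval}
    (h : ‖(b : Eucl n)‖ ≤ D.θ s) :
    D.rawInr (b, s) = Quot.mk _ (Sum.inr (ballProj' ((D.θ s)⁻¹ • (b : Eucl n)))) :=
  if_pos h

lemma theta_pos (D : CollarData n f f') (s : unitInterval) : 0 < D.θ s :=
  lt_of_lt_of_le (by norm_num) (D.hθ₁ s)

lemma ne_zero_of_not_le (D : CollarData n f f') {b : ↥(UnitBall n)} {s : unitInterval}
    (h : ¬ ‖(b : Eucl n)‖ ≤ D.θ s) : (b : Eucl n) ≠ 0 := by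
  intro h0
  apply h
  rw [h0]
  simpa using (D.theta_pos s).le

lemma rawInr_gt (D : CollarData n f f') {b : ↥(UnitBall n)} {s : unitInterval}
    (h : ¬ ‖(b : Eucl n)‖ ≤ D.θ s) :
    D.rawInr (b, s) =
      Quot.mk _ (Sum.inl (D.Γ (s, ‖(b : Eucl n)‖, sphPt _ (D.ne_zero_of_not_le h)))) := by
  rw [rawInr]
  exact (if_neg h).trans (dif_neg (D.ne_zero_of_not_le h))

/-- On the boundary `‖b‖ = θ s` the two descriptions agree in the quotient. -/
lemma rawInr_boundary (D : CollarData n f f') {b : ↥(UnitBall n)} {s : unitInterval}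
    (h : ‖(b : Eucl n)‖ = D.θ s) :
    Quot.mk (attachRel n ⇑f') (Sum.inr (ballProj' ((D.θ s)⁻¹ • (b : Eucl n)))) =
    (if hb : (b : Eucl n) = 0 then junk f'
      else Quot.mk _ (Sum.inl (D.Γ (s, ‖(b : Eucl n)‖, sphPt _ hb)))) := by
  have hb : (b : Eucl n) ≠ 0 := by
    intro h0
    rw [h0] at h
    simp only [norm_zero] at h
    exact absurd h.symm (D.theta_pos s).ne'
  refine Eq.trans ?_ (dif_neg hb).symm
  have hθ : D.θ s = ‖(b : Eucl n)‖ := h.symm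
  have key : ballProj' ((D.θ s)⁻¹ • (b : Eucl n)) = sphIncl (sphPt _ hb) := by
    apply Subtype.ext
    rw [ballProj'_coe, hθ]
    have hnorm : ‖‖(b : Eucl n)‖⁻¹ • (b : Eucl n)‖ = 1 := norm_sphere (sphPt _ hb)
    rw [ballProj_eq_self hnorm.le]
    rfl
  rw [key, mk_rel f' (sphPt _ hb), ← D.hΓθ s (sphPt _ hb), hθ]

lemma continuous_rawInr (D : CollarData n f f') : Continuous D.rawInr := by
  apply continuous_if_le (continuous_norm.comp (continuous_subtype_val.comp continuous_fst))
    (D.θ.continuous.comp continuous_snd)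
  · -- inner branch, globally continuous
    apply Continuous.continuousOn
    apply (continuous_quot_mk.comp continuous_inr).comp
    apply continuous_ballProj'.comp
    apply Continuous.fun_smul
    · exact ((D.θ.continuous.comp continuous_snd).inv₀ (fun p => (D.theta_pos p.2).ne'))
    · exact continuous_subtype_val.comp continuous_fst
  · -- collar branch, continuous on the region ‖b‖ ≥ θ s
    show ContinuousOn _ {p : ↥(UnitBall n) × unitInterval | D.θ p.2 ≤ ‖(p.1 : Eucl n)‖}
    rw [continuousOn_iff_continuous_restrict]
    have hne : ∀ q : {p : ↥(UnitBall n) × unitInterval | D.θ p.2 ≤ ‖(p.1 : Eucl n)‖},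
        ((q : ↥(UnitBall n) × unitInterval).1 : Eucl n) ≠ 0 := by
      intro q h0
      have hq : D.θ (q : ↥(UnitBall n) × unitInterval).2 ≤
          ‖((q : ↥(UnitBall n) × unitInterval).1 : Eucl n)‖ := q.2
      rw [h0, norm_zero] at hq
      exact absurd hq (not_le.mpr (D.theta_pos _))
    have heq : (Set.restrict {p : ↥(UnitBall n) × unitInterval | D.θ p.2 ≤ ‖(p.1 : Eucl n)‖}
        (fun p => if hb : ((p.1 : Eucl n)) = 0 then junk f'
          else Quot.mk _ (Sum.inl (D.Γ (p.2, ‖(p.1 : Eucl n)‖, sphPt _ hb))))) =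
        fun q : {p : ↥(UnitBall n) × unitInterval | D.θ p.2 ≤ ‖(p.1 : Eucl n)‖} =>
          Quot.mk (attachRel n ⇑f') (Sum.inl (D.Γ ((q : ↥(UnitBall n) × unitInterval).2,
          ‖((q : ↥(UnitBall n) × unitInterval).1 : Eucl n)‖, sphPt _ (hne q)))) := by
      funext q
      exact dif_neg (hne q)
    refine (congrArg Continuous heq).mpr ?_
    have hvn : Continuous fun q : {p : ↥(UnitBall n) × unitInterval | D.θ p.2 ≤ ‖(p.1 : Eucl n)‖}
        => ((q : ↥(UnitBall n) × unitInterval).1 : Eucl n) :=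
      continuous_subtype_val.comp (continuous_fst.comp continuous_subtype_val)
    have hns : Continuous fun q : {p : ↥(UnitBall n) × unitInterval | D.θ p.2 ≤ ‖(p.1 : Eucl n)‖}
        => ‖((q : ↥(UnitBall n) × unitInterval).1 : Eucl n)‖ := continuous_norm.comp hvn
    apply (continuous_quot_mk.comp continuous_inl).comp
    apply D.Γ.continuous.comp
    refine Continuous.prodMk (continuous_snd.comp continuous_subtype_val)
      (Continuous.prodMk hns ?_)
    apply Continuous.subtype_mk
    exact (hns.inv₀ (fun q => norm_ne_zero_iff.mpr (hne q))).smul hvn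
  · intro p hp
    exact D.rawInr_boundary hp

noncomputable def raw (D : CollarData n f f') (p : (X ⊕ ↥(UnitBall n)) × unitInterval) :
    AttachCell n ⇑f' :=
  Sum.elim (fun x => Quot.mk _ (Sum.inl (D.P (p.2, x)))) (fun b => D.rawInr (b, p.2)) p.1

lemma continuous_raw (D : CollarData n f f') : Continuous D.raw := by
  have : D.raw = (Sum.elim (fun q : X × unitInterval => Quot.mk _ (Sum.inl (D.P (q.2, q.1))))
      (fun q : ↥(UnitBall n) × unitInterval => D.rawInr q)) ∘
      ((Homeomorph.sumProdDistrib :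
        (X ⊕ ↥(UnitBall n)) × unitInterval ≃ₜ X × unitInterval ⊕ ↥(UnitBall n) × unitInterval)) := by
    funext p
    obtain ⟨w, s⟩ := p
    cases w <;> rfl
  rw [this]
  apply Continuous.comp _ (Homeomorph.continuous _)
  apply continuous_sumElim.mpr
  constructor
  · apply (continuous_quot_mk.comp continuous_inl).comp
    exact D.P.continuous.comp (continuous_snd.prodMk continuous_fst)
  · exact D.continuous_rawInr

lemma raw_resp (D : CollarData n f f') (s : unitInterval) :
    ∀ a b, attachRel n ⇑f a b → D.raw (a, s) = D.raw (b, s) := by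
  rintro _ _ ⟨z, rfl, rfl⟩
  show D.rawInr (sphIncl z, s) = Quot.mk _ (Sum.inl (D.P (s, f z)))
  have hz : ‖(sphIncl z : Eucl n)‖ = 1 := norm_sphere z
  by_cases h : ‖(sphIncl z : Eucl n)‖ ≤ D.θ s
  · have hθ1 : D.θ s = 1 := le_antisymm (D.hθ₂ s) (hz ▸ h)
    rw [D.rawInr_le h]
    have : ballProj' ((D.θ s)⁻¹ • (sphIncl z : Eucl n)) = sphIncl z := by
      apply Subtype.ext
      rw [ballProj'_coe, hθ1, inv_one, one_smul, ballProj_eq_self hz.le]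
    rw [this, mk_rel f' z, ← D.hΓθ s z, hθ1, D.hΓ1 s z]
  · rw [D.rawInr_gt h]
    have hne := D.ne_zero_of_not_le h
    have hzz : sphPt _ hne = z := by
      apply Subtype.ext
      rw [sphPt_of_norm_one hz hne]
      rfl
    rw [hzz, hz, D.hΓ1 s z]

noncomputable def lift0 (D : CollarData n f f') :
    C(AttachCell n ⇑f, C(unitInterval, AttachCell n ⇑f')) :=
  ⟨Quot.lift (⇑(ContinuousMap.curry ⟨D.raw, D.continuous_raw⟩))
      (fun a b hab => ContinuousMap.ext fun s => D.raw_resp s a b hab),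
    continuous_quot_lift _ (ContinuousMap.curry ⟨D.raw, D.continuous_raw⟩).continuous⟩

/-- The induced continuous family `I × AttachCell n f → AttachCell n f'`. -/
noncomputable def hom (D : CollarData n f f') :
    C(unitInterval × AttachCell n ⇑f, AttachCell n ⇑f') :=
  ⟨fun p => (ContinuousMap.uncurry D.lift0) (p.2, p.1),
    (ContinuousMap.uncurry D.lift0).continuous.comp (continuous_snd.prodMk continuous_fst)⟩

lemma hom_mk (D : CollarData n f f') (s : unitInterval) (w : X ⊕ ↥(UnitBall n)) :
    D.hom (s, Quot.mk _ w) = D.raw (w, s) := by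
  unfold hom lift0
  simp only [ContinuousMap.uncurry_apply, ContinuousMap.coe_mk, Function.uncurry_apply_pair,
    ContinuousMap.curry_apply]
  rfl

lemma hom_inl (D : CollarData n f f') (s : unitInterval) (x : X) :
    D.hom (s, Quot.mk _ (Sum.inl x)) = Quot.mk _ (Sum.inl (D.P (s, x))) := by
  rw [D.hom_mk]
  rfl

lemma hom_inr_le (D : CollarData n f f') {s : unitInterval} {b : ↥(UnitBall n)}
    (h : ‖(b : Eucl n)‖ ≤ D.θ s) :
    D.hom (s, Quot.mk _ (Sum.inr b)) =
      Quot.mk _ (Sum.inr (ballProj' ((D.θ s)⁻¹ • (b : Eucl n)))) := by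
  rw [D.hom_mk]
  exact D.rawInr_le h

lemma hom_inr_gt (D : CollarData n f f') {s : unitInterval} {b : ↥(UnitBall n)}
    (h : ¬ ‖(b : Eucl n)‖ ≤ D.θ s) :
    D.hom (s, Quot.mk _ (Sum.inr b)) =
      Quot.mk _ (Sum.inl (D.Γ (s, ‖(b : Eucl n)‖, sphPt _ (D.ne_zero_of_not_le h)))) := by
  rw [D.hom_mk]
  exact D.rawInr_gt h

lemma hom_inr_full (D : CollarData n f f') {s : unitInterval} {b : ↥(UnitBall n)}
    (hθ : D.θ s = 1) :
    D.hom (s, Quot.mk _ (Sum.inr b)) = Quot.mk _ (Sum.inr b) := by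
  rw [D.hom_inr_le (le_of_le_of_eq (norm_ball_le b) hθ.symm)]
  congr 1
  rw [hθ, inv_one, one_smul]
  exact congrArg Sum.inr ((ballProj'_of_norm_le (norm_ball_le b) b.2).trans (Subtype.coe_eta b _))

/-- the map at a fixed parameter -/
noncomputable def mapAt (D : CollarData n f f') (s : unitInterval) :
    C(AttachCell n ⇑f, AttachCell n ⇑f') :=
  D.hom.comp ⟨fun a => (s, a), (continuous_const.prodMk continuous_id)⟩

lemma mapAt_apply (D : CollarData n f f') (s : unitInterval) (a : AttachCell n ⇑f) :
    D.mapAt s a = D.hom (s, a) := rfl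

end CollarData

end AttachAux

namespace AttachAux

open unitInterval Set Metric

variable {n : ℕ} {X X' Y : Type*} [TopologicalSpace X] [TopologicalSpace X'] [TopologicalSpace Y]

noncomputable def clamp : ℝ → unitInterval := Set.projIcc 0 1 zero_le_one

lemma clamp_of_mem {t : ℝ} (h : t ∈ Set.Icc (0:ℝ) 1) : clamp t = ⟨t, h⟩ :=
  Set.projIcc_of_mem _ h

lemma clamp_coe (s : unitInterval) : clamp (s : ℝ) = s := Set.projIcc_val _ s

lemma clamp_one : clamp 1 = 1 := clamp_coe 1

lemma clamp_zero : clamp 0 = 0 := clamp_coe 0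

lemma continuous_clamp : Continuous clamp := continuous_projIcc

/-- the strict induced map data: `X`-part `k`, cell mapped identically -/
noncomputable def strictD (k : C(X, Y)) (f : C(↥(UnitSphere n), X)) :
    CollarData n f (k.comp f) where
  P := k.comp ⟨Prod.snd, continuous_snd⟩
  θ := ContinuousMap.const _ 1
  hθ₁ := fun _ => by norm_num
  hθ₂ := fun _ => le_refl _
  Γ := (k.comp f).comp ⟨fun p => p.2.2, continuous_snd.comp continuous_snd⟩
  hΓθ := fun s z => rfl
  hΓ1 := fun s z => rfl

noncomputable def strictMap (k : C(X, Y)) (f : C(↥(UnitSphere n), X)) :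
    C(AttachCell n ⇑f, AttachCell n ⇑(k.comp f)) :=
  (strictD k f).mapAt 0

lemma strictMap_inl (k : C(X, Y)) (f : C(↥(UnitSphere n), X)) (x : X) :
    strictMap k f (Quot.mk _ (Sum.inl x)) = Quot.mk _ (Sum.inl (k x)) := by
  rw [strictMap]
  erw [CollarData.mapAt_apply, CollarData.hom_inl]
  rfl

lemma strictMap_inr (k : C(X, Y)) (f : C(↥(UnitSphere n), X)) (b : ↥(UnitBall n)) :
    strictMap k f (Quot.mk _ (Sum.inr b)) = Quot.mk _ (Sum.inr b) := by
  rw [strictMap]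
  erw [CollarData.mapAt_apply, CollarData.hom_inr_full]
  rfl

/-- the collar map data: `X`-part `k`, inner half-ball rescaled, collar mapped by `J` -/
noncomputable def colD (k : C(Y, X')) (f : C(↥(UnitSphere n), Y)) (f' : C(↥(UnitSphere n), X'))
    (J : C(unitInterval × ↥(UnitSphere n), X'))
    (hJ0 : ∀ z, J (0, z) = k (f z)) (hJ1 : ∀ z, J (1, z) = f' z) :
    CollarData n f f' where
  P := k.comp ⟨Prod.snd, continuous_snd⟩
  θ := ContinuousMap.const _ (1/2 : ℝ)
  hθ₁ := fun _ => by norm_num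
  hθ₂ := fun _ => by norm_num
  Γ := J.comp ⟨fun p => (clamp (2 - 2 * p.2.1), p.2.2),
    ((continuous_clamp.comp (continuous_const.sub
        (continuous_const.mul (continuous_fst.comp continuous_snd)))).prodMk
      (continuous_snd.comp continuous_snd))⟩
  hΓθ := fun s z => by
    simp only [ContinuousMap.comp_apply, ContinuousMap.coe_mk, ContinuousMap.const_apply]
    rw [show (2 : ℝ) - 2 * (1/2) = 1 by norm_num, clamp_one, hJ1 z]
  hΓ1 := fun s z => by
    simp only [ContinuousMap.comp_apply, ContinuousMap.coe_mk, ContinuousMap.const_apply]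
    rw [show (2 : ℝ) - 2 * 1 = 0 by norm_num, clamp_zero, hJ0 z]

noncomputable def colMap (k : C(Y, X')) (f : C(↥(UnitSphere n), Y)) (f' : C(↥(UnitSphere n), X'))
    (J : C(unitInterval × ↥(UnitSphere n), X'))
    (hJ0 : ∀ z, J (0, z) = k (f z)) (hJ1 : ∀ z, J (1, z) = f' z) :
    C(AttachCell n ⇑f, AttachCell n ⇑f') :=
  (colD k f f' J hJ0 hJ1).mapAt 0

variable {k : C(Y, X')} {f : C(↥(UnitSphere n), Y)} {f' : C(↥(UnitSphere n), X')}
  {J : C(unitInterval × ↥(UnitSphere n), X')}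
  {hJ0 : ∀ z, J (0, z) = k (f z)} {hJ1 : ∀ z, J (1, z) = f' z}

lemma colMap_inl (x : Y) :
    colMap k f f' J hJ0 hJ1 (Quot.mk _ (Sum.inl x)) = Quot.mk _ (Sum.inl (k x)) := by
  rw [colMap]
  erw [CollarData.mapAt_apply, CollarData.hom_inl]
  rfl

lemma colMap_inr_le {b : ↥(UnitBall n)} (h : ‖(b : Eucl n)‖ ≤ 1/2) :
    colMap k f f' J hJ0 hJ1 (Quot.mk _ (Sum.inr b)) =
      Quot.mk _ (Sum.inr (ballProj' (((1/2 : ℝ))⁻¹ • (b : Eucl n)))) := by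
  rw [colMap]
  erw [CollarData.mapAt_apply]
  exact (colD k f f' J hJ0 hJ1).hom_inr_le h

lemma colMap_inr_gt {b : ↥(UnitBall n)} (h : ¬ ‖(b : Eucl n)‖ ≤ 1/2)
    (hb : (b : Eucl n) ≠ 0) :
    colMap k f f' J hJ0 hJ1 (Quot.mk _ (Sum.inr b)) =
      Quot.mk _ (Sum.inl (J (clamp (2 - 2 * ‖(b : Eucl n)‖), sphPt _ hb))) := by
  rw [colMap]
  erw [CollarData.mapAt_apply]
  exact (colD k f f' J hJ0 hJ1).hom_inr_gt h

end AttachAux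

namespace AttachAux

open unitInterval Set Metric

variable {n : ℕ} {X Y : Type*} [TopologicalSpace X] [TopologicalSpace Y]

/-- Lemma A: if `H` is a homotopy from `k' ∘ k` to `id X`, then the collar map built from
`(k', H ∘ f)` is a left homotopy inverse of the strict induced map `A f → A (k∘f)`. -/
theorem lemmaA (k : C(X, Y)) (k' : C(Y, X)) (H : C(unitInterval × X, X))
    (hH0 : ∀ x, H (0, x) = k' (k x)) (hH1 : ∀ x, H (1, x) = x)
    (f : C(↥(UnitSphere n), X))
    (Jψ : C(unitInterval × ↥(UnitSphere n), X))
    (hJψ : ∀ u z, Jψ (u, z) = H (u, f z))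
    (hJ0 : ∀ z, Jψ (0, z) = k' ((k.comp f) z)) (hJ1 : ∀ z, Jψ (1, z) = f z) :
    ((colMap k' (k.comp f) f Jψ hJ0 hJ1).comp (strictMap k f)).Homotopic
      (ContinuousMap.id (AttachCell n ⇑f)) := by
  -- the deformation data
  set KD : CollarData n f f :=
    { P := H
      θ := ⟨fun s => (1 + (s : ℝ))/2,
        (continuous_const.add continuous_subtype_val).div_const _⟩
      hθ₁ := fun s => by
        have := s.2.1
        show (1:ℝ)/4 ≤ (1 + (s:ℝ))/2
        linarith
      hθ₂ := fun s => by
        have := s.2.2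
        show (1 + (s:ℝ))/2 ≤ 1
        linarith
      Γ := H.comp ⟨fun p => (clamp (2 + (p.1 : ℝ) - 2 * p.2.1), f p.2.2),
        ((continuous_clamp.comp ((continuous_const.add
            (continuous_subtype_val.comp continuous_fst)).sub
          (continuous_const.mul (continuous_fst.comp continuous_snd)))).prodMk
          (f.continuous.comp (continuous_snd.comp continuous_snd)))⟩
      hΓθ := fun s z => by
        simp only [ContinuousMap.comp_apply, ContinuousMap.coe_mk]
        rw [show (2:ℝ) + (s:ℝ) - 2 * ((1 + (s:ℝ))/2) = 1 by ring, clamp_one, hH1]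
      hΓ1 := fun s z => by
        simp only [ContinuousMap.comp_apply, ContinuousMap.coe_mk]
        rw [show (2:ℝ) + (s:ℝ) - 2 * 1 = (s:ℝ) by ring, clamp_coe] } with hKD
  have hθ0 : KD.θ 0 = 1/2 := by
    show (1 + ((0:unitInterval):ℝ))/2 = 1/2
    norm_num
  have hθ1 : KD.θ 1 = 1 := by
    show (1 + ((1:unitInterval):ℝ))/2 = 1
    norm_num
  refine ⟨{ toContinuousMap := KD.hom, map_zero_left := ?_, map_one_left := ?_ }⟩
  · -- at time 0 this is the composite
    apply Quot.ind
    intro w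
    show KD.hom (0, Quot.mk _ w) = colMap k' (k.comp f) f Jψ hJ0 hJ1 (strictMap k f (Quot.mk _ w))
    cases w with
    | inl x =>
      rw [KD.hom_inl, strictMap_inl, colMap_inl]
      show Quot.mk _ (Sum.inl (H (0, x))) = _
      rw [hH0]
    | inr b =>
      rw [strictMap_inr]
      by_cases hb : ‖(b : Eucl n)‖ ≤ 1/2
      · rw [KD.hom_inr_le (hb.trans_eq hθ0.symm), colMap_inr_le hb, hθ0]
      · have hb' : ¬ ‖(b : Eucl n)‖ ≤ KD.θ 0 := by rw [hθ0]; exact hb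
        have hΓeval : ∀ (z : ↥(UnitSphere n)), KD.Γ ((0 : unitInterval), ‖(b : Eucl n)‖, z)
            = H (clamp (2 - 2 * ‖(b : Eucl n)‖), f z) := by
          intro z
          show H (clamp (2 + ((0:unitInterval):ℝ) - 2 * ‖(b : Eucl n)‖), f z) = _
          rw [show (2:ℝ) + ((0:unitInterval):ℝ) - 2 * ‖(b : Eucl n)‖
            = 2 - 2 * ‖(b : Eucl n)‖ by norm_num]
        rw [KD.hom_inr_gt hb', colMap_inr_gt hb (KD.ne_zero_of_not_le hb'), hJψ, hΓeval]
  · -- at time 1 this is the identity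
    apply Quot.ind
    intro w
    show KD.hom (1, Quot.mk _ w) = Quot.mk _ w
    cases w with
    | inl x =>
      rw [KD.hom_inl]
      show Quot.mk _ (Sum.inl (H (1, x))) = _
      rw [hH1]
    | inr b =>
      exact KD.hom_inr_full hθ1

end AttachAux

namespace AttachAux

open unitInterval Set Metric

variable {n : ℕ} {X : Type*} [TopologicalSpace X]

lemma norm_half_inv_smul (x : Eucl n) : ‖((1/2 : ℝ))⁻¹ • x‖ = 2 * ‖x‖ := by
  rw [norm_smul, norm_inv, Real.norm_eq_abs, abs_of_pos (by norm_num : (0:ℝ) < 1/2)]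
  norm_num

lemma sphPt_eq_of_smul {x y : Eucl n} {c : ℝ} (hc : 0 < c) (h : y = c • x)
    (hy : y ≠ 0) (hx : x ≠ 0) : sphPt y hy = sphPt x hx := by
  subst h
  exact sphPt_smul hc hx hy

/-- Lemma B: gluing along a homotopy `J` and along its reverse `J'` are mutually
homotopy inverse operations. -/
theorem lemmaB (f₀ f₁ : C(↥(UnitSphere n), X)) (J J' : C(unitInterval × ↥(UnitSphere n), X))
    (hJJ' : ∀ u z, J' (u, z) = J (σ u, z))
    (hJ0 : ∀ z, J (0, z) = (ContinuousMap.id X) (f₀ z)) (hJ1 : ∀ z, J (1, z) = f₁ z)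
    (hJ'0 : ∀ z, J' (0, z) = (ContinuousMap.id X) (f₁ z)) (hJ'1 : ∀ z, J' (1, z) = f₀ z) :
    ((colMap (ContinuousMap.id X) f₁ f₀ J' hJ'0 hJ'1).comp
      (colMap (ContinuousMap.id X) f₀ f₁ J hJ0 hJ1)).Homotopic
      (ContinuousMap.id (AttachCell n ⇑f₀)) := by
  -- first deformation: from the composite to the "crush" map
  set DC : CollarData n f₀ f₀ :=
    { P := ⟨Prod.snd, continuous_snd⟩
      θ := ContinuousMap.const _ (1/4 : ℝ)
      hθ₁ := fun _ => le_refl _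
      hθ₂ := fun _ => by norm_num
      Γ := J.comp ⟨fun p => (clamp (min (min (4 * p.2.1 - 1) (2 - 2 * p.2.1)) (1 - (p.1 : ℝ))),
          p.2.2),
        ((continuous_clamp.comp (Continuous.min (Continuous.min
            ((continuous_const.mul (continuous_fst.comp continuous_snd)).sub continuous_const)
            (continuous_const.sub (continuous_const.mul (continuous_fst.comp continuous_snd))))
          (continuous_const.sub (continuous_subtype_val.comp continuous_fst)))).prodMk
          (continuous_snd.comp continuous_snd))⟩
      hΓθ := fun s z => by
        simp only [ContinuousMap.comp_apply, ContinuousMap.coe_mk, ContinuousMap.const_apply]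
        rw [show 4 * (1/4 : ℝ) - 1 = 0 by norm_num, show (2:ℝ) - 2 * (1/4) = 3/2 by norm_num,
          min_eq_left (by norm_num : (0:ℝ) ≤ 3/2),
          min_eq_left (sub_nonneg.mpr s.2.2), clamp_zero, hJ0]
        rfl
      hΓ1 := fun s z => by
        simp only [ContinuousMap.comp_apply, ContinuousMap.coe_mk]
        rw [show 4 * (1 : ℝ) - 1 = 3 by norm_num, show (2:ℝ) - 2 * 1 = 0 by norm_num,
          min_eq_right (by norm_num : (0:ℝ) ≤ 3),
          min_eq_left (sub_nonneg.mpr s.2.2), clamp_zero, hJ0]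
        rfl } with hDC
  -- second deformation: from the crush map to the identity
  set DN : CollarData n f₀ f₀ :=
    { P := ⟨Prod.snd, continuous_snd⟩
      θ := ⟨fun s => (1 + 3 * (s : ℝ))/4,
        (continuous_const.add (continuous_const.mul continuous_subtype_val)).div_const _⟩
      hθ₁ := fun s => by
        have := s.2.1
        show (1:ℝ)/4 ≤ (1 + 3 * (s:ℝ))/4
        linarith
      hθ₂ := fun s => by
        have := s.2.2
        show (1 + 3 * (s:ℝ))/4 ≤ 1
        linarith
      Γ := f₀.comp ⟨fun p => p.2.2, continuous_snd.comp continuous_snd⟩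
      hΓθ := fun s z => rfl
      hΓ1 := fun s z => rfl } with hDN
  have hθC : ∀ s, DC.θ s = 1/4 := fun _ => rfl
  have hθN0 : DN.θ 0 = 1/4 := by
    show (1 + 3 * ((0:unitInterval):ℝ))/4 = 1/4
    norm_num
  have hθN1 : DN.θ 1 = 1 := by
    show (1 + 3 * ((1:unitInterval):ℝ))/4 = 1
    norm_num
  have homotopy1 : ContinuousMap.Homotopy ((colMap (ContinuousMap.id X) f₁ f₀ J' hJ'0 hJ'1).comp
      (colMap (ContinuousMap.id X) f₀ f₁ J hJ0 hJ1)) (DN.mapAt 0) := by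
    refine { toContinuousMap := DC.hom, map_zero_left := ?_, map_one_left := ?_ }
    · -- time 0 : the composite
      apply Quot.ind
      intro w
      show DC.hom (0, Quot.mk _ w) = _
      cases w with
      | inl x =>
        rw [DC.hom_inl]
        rfl
      | inr b =>
        erw [ContinuousMap.comp_apply]
        have hbne1 : ‖(b : Eucl n)‖ ≤ 1 := norm_ball_le b
        by_cases h2 : ‖(b : Eucl n)‖ ≤ 1/2
        · -- the inner colMap rescales
          rw [colMap_inr_le h2]
          have hb2coe : (ballProj' ((1/2 : ℝ)⁻¹ • (b : Eucl n)) : Eucl n)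
              = (1/2 : ℝ)⁻¹ • (b : Eucl n) := by
            rw [ballProj'_coe]
            apply ballProj_eq_self
            rw [norm_half_inv_smul]
            linarith
          have hb2norm : ‖(ballProj' ((1/2 : ℝ)⁻¹ • (b : Eucl n)) : Eucl n)‖
              = 2 * ‖(b : Eucl n)‖ := by rw [hb2coe, norm_half_inv_smul]
          by_cases h1 : ‖(b : Eucl n)‖ ≤ 1/4
          · -- inner region: double rescaling
            rw [DC.hom_inr_le (le_of_le_of_eq h1 (hθC 0).symm)]
            rw [colMap_inr_le (by rw [hb2norm]; linarith)]
            have hv : (1/2 : ℝ)⁻¹ • (ballProj' ((1/2 : ℝ)⁻¹ • (b : Eucl n)) : Eucl n)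
                = (DC.θ 0)⁻¹ • (b : Eucl n) := by
              rw [hb2coe, hθC, smul_smul,
                show ((1:ℝ)/2)⁻¹ * (1/2)⁻¹ = ((1:ℝ)/4)⁻¹ by norm_num]
            rw [← hv]
          · -- middle region: collar via J'
            push_neg at h1
            have houter : ¬ ‖(ballProj' ((1/2 : ℝ)⁻¹ • (b : Eucl n)) : Eucl n)‖ ≤ 1/2 := by
              rw [hb2norm]
              intro hcon
              linarith
            have hbne : (b : Eucl n) ≠ 0 := by
              intro h0
              rw [h0, norm_zero] at h1
              linarith
            have hb2ne : (ballProj' ((1/2 : ℝ)⁻¹ • (b : Eucl n)) : Eucl n) ≠ 0 := by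
              rw [hb2coe]
              intro h0
              apply hbne
              simpa using h0
            have h1' : ¬ ‖(b : Eucl n)‖ ≤ DC.θ 0 := by rw [hθC]; push_neg; exact h1
            rw [colMap_inr_gt houter hb2ne, DC.hom_inr_gt h1']
            have hsph : sphPt _ hb2ne = sphPt _ (DC.ne_zero_of_not_le h1') :=
              sphPt_eq_of_smul (by norm_num) hb2coe _ _
            have hmem : 4 * ‖(b : Eucl n)‖ - 1 ∈ Set.Icc (0:ℝ) 1 := by
              constructor <;> [linarith; linarith]
            have hL : DC.Γ ((0:unitInterval), ‖(b : Eucl n)‖, sphPt _ (DC.ne_zero_of_not_le h1'))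
                = J (⟨4 * ‖(b : Eucl n)‖ - 1, hmem⟩, sphPt _ (DC.ne_zero_of_not_le h1')) := by
              show J (clamp (min (min (4 * ‖(b : Eucl n)‖ - 1) (2 - 2 * ‖(b : Eucl n)‖))
                (1 - ((0:unitInterval):ℝ))), _) = _
              rw [show (1:ℝ) - ((0:unitInterval):ℝ) = 1 by norm_num,
                min_eq_left (by linarith : 4 * ‖(b : Eucl n)‖ - 1 ≤ 2 - 2 * ‖(b : Eucl n)‖),
                min_eq_left (by linarith : 4 * ‖(b : Eucl n)‖ - 1 ≤ 1),
                clamp_of_mem hmem]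
            have hmem' : 2 - 2 * ‖(ballProj' ((1/2 : ℝ)⁻¹ • (b : Eucl n)) : Eucl n)‖
                ∈ Set.Icc (0:ℝ) 1 := by
              rw [hb2norm]
              constructor <;> linarith
            have hR : J' (clamp (2 - 2 * ‖(ballProj' ((1/2 : ℝ)⁻¹ • (b : Eucl n)) : Eucl n)‖),
                  sphPt _ hb2ne)
                = J (⟨4 * ‖(b : Eucl n)‖ - 1, hmem⟩, sphPt _ (DC.ne_zero_of_not_le h1')) := by
              rw [hJJ', hsph, clamp_of_mem hmem']
              have hσ : σ (⟨2 - 2 * ‖(ballProj' ((1/2 : ℝ)⁻¹ • (b : Eucl n)) : Eucl n)‖, hmem'⟩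
                  : unitInterval) = ⟨4 * ‖(b : Eucl n)‖ - 1, hmem⟩ := by
                apply Subtype.ext
                rw [coe_symm_eq]
                show 1 - (2 - 2 * ‖(ballProj' ((1/2 : ℝ)⁻¹ • (b : Eucl n)) : Eucl n)‖) = _
                rw [hb2norm]
                ring
              rw [hσ]
            rw [hL, hR]
        · -- outer region: collar via J, unchanged by the outer map
          push_neg at h2
          have hbne : (b : Eucl n) ≠ 0 := by
            intro h0
            rw [h0, norm_zero] at h2
            linarith
          have h2' : ¬ ‖(b : Eucl n)‖ ≤ 1/2 := by push_neg; exact h2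
          have h1' : ¬ ‖(b : Eucl n)‖ ≤ DC.θ 0 := by rw [hθC]; push_neg; linarith
          rw [colMap_inr_gt h2' hbne, colMap_inl, DC.hom_inr_gt h1']
          have hmem : 2 - 2 * ‖(b : Eucl n)‖ ∈ Set.Icc (0:ℝ) 1 := by
            constructor <;> linarith
          have hL : DC.Γ ((0:unitInterval), ‖(b : Eucl n)‖, sphPt _ (DC.ne_zero_of_not_le h1'))
              = J (clamp (2 - 2 * ‖(b : Eucl n)‖), sphPt _ (DC.ne_zero_of_not_le h1')) := by
            show J (clamp (min (min (4 * ‖(b : Eucl n)‖ - 1) (2 - 2 * ‖(b : Eucl n)‖))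
              (1 - ((0:unitInterval):ℝ))), _) = _
            rw [show (1:ℝ) - ((0:unitInterval):ℝ) = 1 by norm_num,
              min_eq_right (by linarith : 2 - 2 * ‖(b : Eucl n)‖ ≤ 4 * ‖(b : Eucl n)‖ - 1),
              min_eq_left (by linarith : 2 - 2 * ‖(b : Eucl n)‖ ≤ 1)]
          rw [hL]
          rfl
    · -- time 1 : the crush map
      apply Quot.ind
      intro w
      show DC.hom (1, Quot.mk _ w) = DN.hom (0, Quot.mk _ w)
      cases w with
      | inl x =>
        rw [DC.hom_inl, DN.hom_inl]
        rfl
      | inr b =>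
        by_cases h1 : ‖(b : Eucl n)‖ ≤ 1/4
        · rw [DC.hom_inr_le (le_of_le_of_eq h1 (hθC 1).symm),
            DN.hom_inr_le (le_of_le_of_eq h1 hθN0.symm), hθC, hθN0]
        · have h1C : ¬ ‖(b : Eucl n)‖ ≤ DC.θ 1 := by rw [hθC]; exact h1
          have h1N : ¬ ‖(b : Eucl n)‖ ≤ DN.θ 0 := by rw [hθN0]; exact h1
          rw [DC.hom_inr_gt h1C, DN.hom_inr_gt h1N]
          push_neg at h1
          have hbnorm1 : ‖(b : Eucl n)‖ ≤ 1 := norm_ball_le b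
          have hL : DC.Γ ((1:unitInterval), ‖(b : Eucl n)‖, sphPt _ (DC.ne_zero_of_not_le h1C))
              = f₀ (sphPt _ (DC.ne_zero_of_not_le h1C)) := by
            show J (clamp (min (min (4 * ‖(b : Eucl n)‖ - 1) (2 - 2 * ‖(b : Eucl n)‖))
              (1 - ((1:unitInterval):ℝ))), _) = _
            rw [show (1:ℝ) - ((1:unitInterval):ℝ) = 0 by norm_num,
              min_eq_right (by
                apply le_min <;> linarith), clamp_zero, hJ0]
            rfl
          rw [hL]
          rfl
  have homotopy2 : ContinuousMap.Homotopy (DN.mapAt 0)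
      (ContinuousMap.id (AttachCell n ⇑f₀)) := by
    refine { toContinuousMap := DN.hom, map_zero_left := ?_, map_one_left := ?_ }
    · intro a
      rfl
    · apply Quot.ind
      intro w
      show DN.hom (1, Quot.mk _ w) = Quot.mk _ w
      cases w with
      | inl x =>
        rw [DN.hom_inl]
        rfl
      | inr b =>
        exact DN.hom_inr_full hθN1
  exact ⟨homotopy1.trans homotopy2⟩

end AttachAux

namespace AttachAux

open unitInterval ContinuousMap

variable {n : ℕ} {X₁ X₂ : Type*} [TopologicalSpace X₁] [TopologicalSpace X₂]

theorem main (h : ContinuousMap.HomotopyEquiv X₁ X₂) (f₁ : C(↥(UnitSphere n), X₁)) :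
    Nonempty (ContinuousMap.HomotopyEquiv (AttachCell n ⇑f₁)
      (AttachCell n ⇑(h.toFun.comp f₁))) := by
  classical
  set k : C(X₁, X₂) := h.toFun with hk
  set k' : C(X₂, X₁) := h.invFun with hk'
  obtain ⟨H⟩ := h.left_inv
  obtain ⟨G⟩ := h.right_inv
  -- notation for the attaching maps
  set f₂ : C(↥(UnitSphere n), X₂) := k.comp f₁ with hf₂
  set fN : C(↥(UnitSphere n), X₁) := k'.comp (k.comp f₁) with hfN
  -- the homotopy `H : k' ∘ k ≃ id` composed with `f₁`
  set Jψ : C(unitInterval × ↥(UnitSphere n), X₁) :=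
    (H.toContinuousMap).comp ⟨fun p => (p.1, f₁ p.2),
      (continuous_fst.prodMk (f₁.continuous.comp continuous_snd))⟩ with hJψdef
  have hJψ : ∀ u z, Jψ (u, z) = H (u, f₁ z) := fun u z => rfl
  have hJψ0 : ∀ z, Jψ (0, z) = k' ((k.comp f₁) z) := fun z => by
    rw [hJψ, H.apply_zero]
    rfl
  have hJψ1 : ∀ z, Jψ (1, z) = f₁ z := fun z => by
    rw [hJψ, H.apply_one]
    rfl
  -- the homotopy `G : k ∘ k' ≃ id` composed with `f₂`
  set JG : C(unitInterval × ↥(UnitSphere n), X₂) :=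
    (G.toContinuousMap).comp ⟨fun p => (p.1, f₂ p.2),
      (continuous_fst.prodMk (f₂.continuous.comp continuous_snd))⟩ with hJGdef
  have hJG : ∀ u z, JG (u, z) = G (u, f₂ z) := fun u z => rfl
  have hJG0 : ∀ z, JG (0, z) = k ((k'.comp f₂) z) := fun z => by
    rw [hJG, G.apply_zero]
    rfl
  have hJG1 : ∀ z, JG (1, z) = f₂ z := fun z => by
    rw [hJG, G.apply_one]
    rfl
  -- the reverse of Jψ
  set Jσ : C(unitInterval × ↥(UnitSphere n), X₁) :=
    Jψ.comp ⟨fun p => (σ p.1, p.2),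
      ((continuous_symm.comp continuous_fst).prodMk continuous_snd)⟩ with hJσdef
  have hJσ : ∀ u z, Jσ (u, z) = Jψ (σ u, z) := fun u z => rfl
  have hJσ0 : ∀ z, Jσ (0, z) = (ContinuousMap.id X₁) (f₁ z) := fun z => by
    rw [hJσ, symm_zero, hJψ1]
    rfl
  have hJσ1 : ∀ z, Jσ (1, z) = fN z := fun z => by
    rw [hJσ, symm_one, hJψ0 z]
    rfl
  have heψ0 : ∀ z, Jψ (0, z) = (ContinuousMap.id X₁) (fN z) := fun z => by
    rw [hJψ0 z]
    rfl
  -- the maps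
  set F : C(AttachCell n ⇑f₁, AttachCell n ⇑f₂) := strictMap k f₁ with hF
  set Ψ : C(AttachCell n ⇑f₂, AttachCell n ⇑f₁) := colMap k' f₂ f₁ Jψ hJψ0 hJψ1 with hΨ
  set F' : C(AttachCell n ⇑f₂, AttachCell n ⇑fN) := strictMap k' f₂ with hF'
  set Ψ' : C(AttachCell n ⇑fN, AttachCell n ⇑f₂) := colMap k fN f₂ JG hJG0 hJG1 with hΨ'
  set e : C(AttachCell n ⇑fN, AttachCell n ⇑f₁) :=
    colMap (ContinuousMap.id X₁) fN f₁ Jψ heψ0 hJψ1 with he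
  set eb : C(AttachCell n ⇑f₁, AttachCell n ⇑fN) :=
    colMap (ContinuousMap.id X₁) f₁ fN Jσ hJσ0 hJσ1 with heb
  -- Fact 1 : Ψ ∘ F ≃ id
  have fact1 : (Ψ.comp F).Homotopic (ContinuousMap.id (AttachCell n ⇑f₁)) :=
    lemmaA k k' H.toContinuousMap
      (fun x => by rw [show H.toContinuousMap (0, x) = H (0, x) from rfl, H.apply_zero]; rfl)
      (fun x => by rw [show H.toContinuousMap (1, x) = H (1, x) from rfl, H.apply_one]; rfl)
      f₁ Jψ hJψ hJψ0 hJψ1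
  -- Fact 2 : Ψ' ∘ F' ≃ id
  have fact2 : (Ψ'.comp F').Homotopic (ContinuousMap.id (AttachCell n ⇑f₂)) :=
    lemmaA k' k G.toContinuousMap
      (fun y => by rw [show G.toContinuousMap (0, y) = G (0, y) from rfl, G.apply_zero]; rfl)
      (fun y => by rw [show G.toContinuousMap (1, y) = G (1, y) from rfl, G.apply_one]; rfl)
      f₂ JG hJG hJG0 hJG1
  -- Fact 3 : eb ∘ e ≃ id on A fN
  have fact3 : (eb.comp e).Homotopic (ContinuousMap.id (AttachCell n ⇑fN)) :=
    lemmaB fN f₁ Jψ Jσ hJσ heψ0 hJψ1 hJσ0 hJσ1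
  -- Fact 4 : e ∘ eb ≃ id on A f₁
  have fact4 : (e.comp eb).Homotopic (ContinuousMap.id (AttachCell n ⇑f₁)) :=
    lemmaB f₁ fN Jσ Jψ
      (fun u z => by rw [hJσ, symm_symm]) hJσ0 hJσ1 heψ0 hJψ1
  -- Fact 5 : Ψ = e ∘ F' (as continuous maps)
  have fact5 : Ψ = e.comp F' := by
    apply ContinuousMap.ext
    apply Quot.ind
    intro w
    show Ψ (Quot.mk _ w) = e (F' (Quot.mk _ w))
    cases w with
    | inl x =>
      rw [hΨ, hF', he, strictMap_inl, colMap_inl, colMap_inl]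
      rfl
    | inr b =>
      rw [hF', strictMap_inr]
      by_cases hb : ‖(b : Eucl n)‖ ≤ 1/2
      · rw [hΨ, he, colMap_inr_le hb, colMap_inr_le hb]
      · have hbne : (b : Eucl n) ≠ 0 := by
          intro h0
          apply hb
          rw [h0, norm_zero]
          norm_num
        rw [hΨ, he, colMap_inr_gt hb hbne, colMap_inr_gt hb hbne]
  -- the left homotopy inverse of Ψ
  set L : C(AttachCell n ⇑f₁, AttachCell n ⇑f₂) := Ψ'.comp eb with hL
  have fact6 : (L.comp Ψ).Homotopic (ContinuousMap.id (AttachCell n ⇑f₂)) := by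
    rw [fact5, hL, ContinuousMap.comp_assoc, ← ContinuousMap.comp_assoc eb e F',
      ← ContinuousMap.comp_assoc Ψ' _ F']
    have step1 : ((Ψ'.comp (eb.comp e)).comp F').Homotopic ((Ψ'.comp
        (ContinuousMap.id (AttachCell n ⇑fN))).comp F') :=
      ContinuousMap.Homotopic.comp
        (ContinuousMap.Homotopic.comp (ContinuousMap.Homotopic.refl Ψ') fact3) (ContinuousMap.Homotopic.refl F')
    refine step1.trans ?_
    rw [ContinuousMap.comp_id]
    exact fact2
  -- F is homotopic to L
  have hFL : F.Homotopic L := by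
    have h2 : ((L.comp Ψ).comp F).Homotopic ((ContinuousMap.id (AttachCell n ⇑f₂)).comp F) :=
      ContinuousMap.Homotopic.comp fact6 (ContinuousMap.Homotopic.refl F)
    have h3 : F.Homotopic ((L.comp Ψ).comp F) := by
      rw [← ContinuousMap.id_comp F]
      exact (by rw [ContinuousMap.id_comp F, ← ContinuousMap.id_comp F] at h2 ⊢; exact h2.symm)
    refine h3.trans ?_
    rw [ContinuousMap.comp_assoc]
    have h4 : (L.comp (Ψ.comp F)).Homotopic
        (L.comp (ContinuousMap.id (AttachCell n ⇑f₁))) :=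
      ContinuousMap.Homotopic.comp (ContinuousMap.Homotopic.refl L) fact1
    refine h4.trans ?_
    rw [ContinuousMap.comp_id]
  -- conclude
  have right : (F.comp Ψ).Homotopic (ContinuousMap.id (AttachCell n ⇑f₂)) := by
    have := ContinuousMap.Homotopic.comp hFL (ContinuousMap.Homotopic.refl Ψ)
    exact this.trans fact6
  exact ⟨{ toFun := F, invFun := Ψ, left_inv := fact1, right_inv := right }⟩

end AttachAux


/-- If `h : X₁ → X₂` is a homotopy equivalence and
`f₁ : S^{n-1} → X₁`, `f₂ : S^{n-1} → X₂` are continuous with `f₂ = h ∘ f₁`, then the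
adjunction spaces `X₁ ∪_{f₁} Bⁿ` and `X₂ ∪_{f₂} Bⁿ` are homotopy equivalent. -/
theorem attachCell_homotopyEquiv {X₁ X₂ : Type*} [TopologicalSpace X₁]
    [TopologicalSpace X₂] (n : ℕ)
    (h : ContinuousMap.HomotopyEquiv X₁ X₂)
    (f₁ : C(↥(UnitSphere n), X₁)) (f₂ : C(↥(UnitSphere n), X₂))
    (hcomp : ∀ z, f₂ z = h.toFun (f₁ z)) :
    Nonempty (ContinuousMap.HomotopyEquiv (AttachCell n ⇑f₁) (AttachCell n ⇑f₂)) := by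
  have hf : f₂ = h.toFun.comp f₁ := ContinuousMap.ext hcomp
  subst hf
  exact AttachAux.main h f₁
end
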